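/- Let (L, L̄) ∈ 𝔄 with L of the form Λ + u₀ + u₋₁Λ⁻¹ + ⋯ (i.e. L_{≥1} = Λ) and L̄ of the form ū₋₁Λ⁻¹ + ū₀ + ū₁Λ + ⋯ (i.e. L̄_{≤−2} = 0). Then for every covector (X, X̄) ∈ 𝔄, the value P₁(L,L̄)(X,X̄) lies in (A⁺)_{≤0} ⊕ (A⁻)_{≥−1}: its first component has vanishing coefficients in degrees ≥ 1 and its second component has vanishing coefficients in degrees ≤ −2. Consequently the first Poisson tensor restricts to the affine space of operators of this form without any Dirac correction term. -/

import Mathlib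

noncomputable section

/-- Formal difference operators `X = ∑ₖ aₖ Λᵏ`, encoded by their coefficient functions:
`X k n` is the value `aₖ(n)` of the coefficient of `Λᵏ`. -/
abbrev DOp : Type := ℤ → ℤ → ℂ

/-- Product of difference operators, determined by `Λᵏ a = (a ∘ (·+k)) Λᵏ`:
the coefficient of `Λᵐ` in `X*Y` at `n` is `∑_{k+l=m} aₖ(n) bₗ(n+k)`. -/
def dmul (X Y : DOp) : DOp := fun m n => ∑ᶠ k : ℤ, X k n * Y (m - k) (n + k)

/-- Commutator `[X,Y] = XY - YX`. -/
def dcomm (X Y : DOp) : DOp := dmul X Y - dmul Y X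

/-- Truncation `X_{≥K}`. -/
def truncGe (K : ℤ) (X : DOp) : DOp := fun k n => if K ≤ k then X k n else 0
/-- Truncation `X_{≤K}`. -/
def truncLe (K : ℤ) (X : DOp) : DOp := fun k n => if k ≤ K then X k n else 0
/-- Truncation `X_{>K}`. -/
def truncGt (K : ℤ) (X : DOp) : DOp := fun k n => if K < k then X k n else 0
/-- Truncation `X_{<K}`. -/
def truncLt (K : ℤ) (X : DOp) : DOp := fun k n => if k < K then X k n else 0

/-- `X₊ := X_{≥0}`. -/
def dpos (X : DOp) : DOp := truncGe 0 X

/-- `X₋ := X_{<0}`. -/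
def dneg (X : DOp) : DOp := truncLt 0 X

/-- The shift operator `Λ`. -/
def dlam : DOp := fun k _ => if k = 1 then 1 else 0

/-- The identity operator. -/
def done : DOp := fun k _ => if k = 0 then 1 else 0

/-- Powers of a difference operator. -/
def dpow (X : DOp) : ℕ → DOp
  | 0 => done
  | n + 1 => dmul (dpow X n) X

/-- The residue: coefficient of `Λ⁰`. -/
def dres (X : DOp) : ℤ → ℂ := X 0

/-- The trace: `tr X = ∑ₙ a₀(n)`. -/
def dtr (X : DOp) : ℂ := ∑ᶠ n : ℤ, X 0 n

/-- `A⁺`: coefficients vanish in all sufficiently high degrees. -/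
def IsUpper (X : DOp) : Prop := ∃ K : ℤ, ∀ k : ℤ, K < k → X k = 0

/-- `A⁻`: coefficients vanish in all sufficiently low degrees. -/
def IsLower (X : DOp) : Prop := ∃ K : ℤ, ∀ k : ℤ, k < K → X k = 0

/-- `A⁰`: only finitely many nonzero coefficient functions. -/
def IsBdd (X : DOp) : Prop := {k : ℤ | X k ≠ 0}.Finite

/-- All coefficient functions finitely supported (finite total support). -/
def FinSuppOp (X : DOp) : Prop := (Function.support fun pr : ℤ × ℤ => X pr.1 pr.2).Finite

/-- Membership in `𝔄 = A⁺ ⊕ A⁻`. -/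
def InA (x : DOp × DOp) : Prop := IsUpper x.1 ∧ IsLower x.2

/-- Componentwise commutator on `𝔄`. -/
def pcomm (x y : DOp × DOp) : DOp × DOp := (dcomm x.1 y.1, dcomm x.2 y.2)

/-- Trace pairing `⟨(X,X̄),(Y,Ȳ)⟩ = tr(XY) + tr(X̄Ȳ)` on `𝔄`. -/
def ip (x y : DOp × DOp) : ℂ := dtr (dmul x.1 y.1) + dtr (dmul x.2 y.2)

/-- The first Poisson tensor `P₁` on `𝔄`, at the point `Lp = (L, L̄)`,
evaluated on the covector `x = (X, X̄)`. -/
def P1T (Lp x : DOp × DOp) : DOp × DOp :=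
  (dcomm Lp.1 (dneg x.1 - dneg x.2)
      - truncLe 0 (dcomm Lp.1 x.1 + dcomm Lp.2 x.2),
   dcomm Lp.2 (dpos x.2 - dpos x.1)
      - truncGt 0 (dcomm Lp.1 x.1 + dcomm Lp.2 x.2))

/-- The second Poisson tensor `P₂` on `𝔄`. -/
def P2T (Lp x : DOp × DOp) : DOp × DOp :=
  ((1 / 2 : ℂ) •
      (dcomm Lp.1 (dneg (dmul Lp.1 x.1 + dmul x.1 Lp.1)
            - dneg (dmul Lp.2 x.2 + dmul x.2 Lp.2))
        - dmul Lp.1 (truncLe 0 (dcomm Lp.1 x.1 + dcomm Lp.2 x.2))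
        - dmul (truncLe 0 (dcomm Lp.1 x.1 + dcomm Lp.2 x.2)) Lp.1),
   (1 / 2 : ℂ) •
      (dcomm Lp.2 (dpos (dmul Lp.2 x.2 + dmul x.2 Lp.2)
            - dpos (dmul Lp.1 x.1 + dmul x.1 Lp.1))
        - dmul Lp.2 (truncGt 0 (dcomm Lp.1 x.1 + dcomm Lp.2 x.2))
        - dmul (truncGt 0 (dcomm Lp.1 x.1 + dcomm Lp.2 x.2)) Lp.2))

/-- The third Poisson tensor `P₃` on `𝔄`. -/
def P3T (Lp x : DOp × DOp) : DOp × DOp :=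
  (dcomm Lp.1 (dneg (dmul (dmul Lp.1 x.1) Lp.1 - dmul (dmul Lp.2 x.2) Lp.2))
      - dmul (dmul Lp.1 (truncLe 0 (dcomm Lp.1 x.1 + dcomm Lp.2 x.2))) Lp.1,
   dcomm Lp.2 (dpos (dmul (dmul Lp.2 x.2) Lp.2 - dmul (dmul Lp.1 x.1) Lp.1))
      - dmul (dmul Lp.2 (truncGt 0 (dcomm Lp.1 x.1 + dcomm Lp.2 x.2))) Lp.2)

/-- at a point `(L, L̄)` with `L = Λ + u₀ + u₋₁Λ⁻¹ + ⋯` (`L_{≥1} = Λ`)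
and `L̄_{≤−2} = 0`, the value of the first Poisson tensor on any covector `(X,X̄) ∈ 𝔄`
lies in `(A⁺)_{≤0} ⊕ (A⁻)_{≥−1}`: the first Poisson tensor restricts to this affine
space without any Dirac correction. -/
theorem P1_is_tangent (L Lb X Xb : DOp)
    (hL : truncGe 1 L = dlam) (hLb : truncLe (-2) Lb = 0)
    (hX : IsUpper X) (hXb : IsLower Xb) :
    truncGe 1 (P1T (L, Lb) (X, Xb)).1 = 0
    ∧ truncLe (-2) (P1T (L, Lb) (X, Xb)).2 = 0 := by
  have hL2 : ∀ k : ℤ, 2 ≤ k → ∀ n, L k n = 0 := by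
    intro k hk n
    have h := congrFun (congrFun hL k) n
    simp only [truncGe, dlam] at h
    rw [if_pos (by omega : (1:ℤ) ≤ k), if_neg (by omega : ¬ k = 1)] at h
    exact h
  have hLb2 : ∀ k : ℤ, k ≤ -2 → ∀ n, Lb k n = 0 := by
    intro k hk n
    have h := congrFun (congrFun hLb k) n
    simp only [truncLe] at h
    rw [if_pos hk] at h
    simpa using h
  constructor
  · funext k n
    simp only [truncGe, Pi.zero_apply]
    split_ifs with hk
    · simp only [P1T, dcomm, dmul, Pi.sub_apply, truncLe]
      rw [if_neg (by omega : ¬ k ≤ 0)]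
      have h1 : ∑ᶠ j : ℤ, L j n * (dneg X (k - j) (n + j) - dneg Xb (k - j) (n + j)) = 0 := by
        apply finsum_eq_zero_of_forall_eq_zero
        intro j
        by_cases hj : j ≤ k
        · have hc : ¬ (k - j < 0) := by omega
          have hz : dneg X (k - j) (n + j) - dneg Xb (k - j) (n + j) = 0 := by
            simp [dneg, truncLt, hc]
          rw [hz, mul_zero]
        · rw [hL2 j (by omega) n, zero_mul]
      have h2 : ∑ᶠ j : ℤ, (dneg X j n - dneg Xb j n) * L (k - j) (n + j) = 0 := by
        apply finsum_eq_zero_of_forall_eq_zero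
        intro j
        by_cases hj : j < 0
        · rw [hL2 (k - j) (by omega) (n + j), mul_zero]
        · have hz : dneg X j n - dneg Xb j n = 0 := by
            simp [dneg, truncLt, hj]
          rw [hz, zero_mul]
      rw [h1, h2]; ring
    · rfl
  · funext k n
    simp only [truncLe, Pi.zero_apply]
    split_ifs with hk
    · simp only [P1T, dcomm, dmul, Pi.sub_apply, truncGt]
      rw [if_neg (by omega : ¬ (0:ℤ) < k)]
      have h1 : ∑ᶠ j : ℤ, Lb j n * (dpos Xb (k - j) (n + j) - dpos X (k - j) (n + j)) = 0 := by
        apply finsum_eq_zero_of_forall_eq_zero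
        intro j
        by_cases hj : j ≤ k
        · rw [hLb2 j (by omega) n, zero_mul]
        · have hc : ¬ ((0:ℤ) ≤ k - j) := by omega
          have hz : dpos Xb (k - j) (n + j) - dpos X (k - j) (n + j) = 0 := by
            simp [dpos, truncGe, hc, hj]
          rw [hz, mul_zero]
      have h2 : ∑ᶠ j : ℤ, (dpos Xb j n - dpos X j n) * Lb (k - j) (n + j) = 0 := by
        apply finsum_eq_zero_of_forall_eq_zero
        intro j
        by_cases hj : (0:ℤ) ≤ j
        · rw [hLb2 (k - j) (by omega) (n + j), mul_zero]
        · have hz : dpos Xb j n - dpos X j n = 0 := by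
            simp [dpos, truncGe, hj]
          rw [hz, zero_mul]
      rw [h1, h2]; ring
    · rfl
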